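/- The kernel of τ₂ has dimension (4n³ + 9n² + 5n)/6; precisely, the subspace of pairs (B_Γ, B_C), where B_Γ : V × V × V → ℝ is trilinear with B_Γ(X,Y,Z) = −B_Γ(X,Z,Y) for all X, Y, Z and B_Γ(X,Y,Z) = 0 whenever Y or Z lies in the vertical subspace {0} × (Fin n → ℝ), and B_C is a symmetric bilinear form on V, satisfying for all X, Y, Z ∈ V: (i) B_Γ(P_h X, Y, Z) + B_Γ(P_h Y, Z, X) + B_Γ(P_h Z, X, Y) = 0; (ii) B_Γ(J X, Y, Z) + B_Γ(J Y, Z, X) + B_Γ(J Z, X, Y) = 0; (iii) (1/2)·B_Γ(C, X, Y) − B_C(P_h X, J Y) + B_C(P_h Y, J X) = 0, has dimension (4n³ + 9n² + 5n)/6. -/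

import Mathlib

set_option synthInstance.maxHeartbeats 1000000
set_option maxHeartbeats 1000000

noncomputable section

/-- The pointwise model `V = (Fin n → ℝ) × (Fin n → ℝ)` of the double tangent space
`T_x(TM)` for a spray on an `n`-dimensional manifold, in an adapted basis. -/
abbrev V (n : ℕ) : Type := (Fin n → ℝ) × (Fin n → ℝ)

/-- The vertical endomorphism `J (x, y) = (0, x)`. -/
def Jmap (n : ℕ) : V n →ₗ[ℝ] V n where
  toFun p := (0, p.1)
  map_add' a b := by simp
  map_smul' c a := by simp

/-- The horizontal projector `P_h (x, y) = (x, 0)`. -/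
def Ph (n : ℕ) : V n →ₗ[ℝ] V n where
  toFun p := (p.1, 0)
  map_add' a b := by simp
  map_smul' c a := by simp

/-- The `j`-th standard basis vector of `Fin n → ℝ`, indexed by `1 ≤ j ≤ n`
(zero if `j` is out of range). -/
def dlt (n j : ℕ) : Fin n → ℝ := fun i => if (i : ℕ) + 1 = j then 1 else 0

/-- The horizontal basis vector `h_j`, `1 ≤ j ≤ n`. -/
def hvec (n j : ℕ) : V n := (dlt n j, 0)

/-- The vertical basis vector `v_j`, `1 ≤ j ≤ n`. -/
def vvec (n j : ℕ) : V n := (0, dlt n j)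

/-- The spray vector `S = h_n`. -/
def Svec (n : ℕ) : V n := hvec n n

/-- The Liouville vector `C = v_n = J S`. -/
def Cvec (n : ℕ) : V n := vvec n n

/-- Bilinear forms on `V n`. -/
abbrev Bil (n : ℕ) := V n →ₗ[ℝ] V n →ₗ[ℝ] ℝ

/-- Trilinear forms on `V n` (bundled). -/
abbrev Tri (n : ℕ) := V n →ₗ[ℝ] V n →ₗ[ℝ] V n →ₗ[ℝ] ℝ

/-- Trilinearity of a function `A : V × V × V → ℝ`. -/
def IsTrilin (n : ℕ) (A : V n → V n → V n → ℝ) : Prop :=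
  (∀ X X' Y Z, A (X + X') Y Z = A X Y Z + A X' Y Z) ∧
  (∀ (c : ℝ) X Y Z, A (c • X) Y Z = c * A X Y Z) ∧
  (∀ X Y Y' Z, A X (Y + Y') Z = A X Y Z + A X Y' Z) ∧
  (∀ (c : ℝ) X Y Z, A X (c • Y) Z = c * A X Y Z) ∧
  (∀ X Y Z Z', A X Y (Z + Z') = A X Y Z + A X Y Z') ∧
  (∀ (c : ℝ) X Y Z, A X Y (c • Z) = c * A X Y Z)

theorem IsTrilin.add {n : ℕ} {a b : V n → V n → V n → ℝ}
    (ha : IsTrilin n a) (hb : IsTrilin n b) : IsTrilin n (a + b) := by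
  obtain ⟨ha1, ha2, ha3, ha4, ha5, ha6⟩ := ha
  obtain ⟨hb1, hb2, hb3, hb4, hb5, hb6⟩ := hb
  refine ⟨fun X X' Y Z => ?_, fun c X Y Z => ?_, fun X Y Y' Z => ?_,
    fun c X Y Z => ?_, fun X Y Z Z' => ?_, fun c X Y Z => ?_⟩ <;>
      simp only [Pi.add_apply]
  · linear_combination ha1 X X' Y Z + hb1 X X' Y Z
  · linear_combination ha2 c X Y Z + hb2 c X Y Z
  · linear_combination ha3 X Y Y' Z + hb3 X Y Y' Z
  · linear_combination ha4 c X Y Z + hb4 c X Y Z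
  · linear_combination ha5 X Y Z Z' + hb5 X Y Z Z'
  · linear_combination ha6 c X Y Z + hb6 c X Y Z

theorem IsTrilin.smul {n : ℕ} (c : ℝ) {a : V n → V n → V n → ℝ}
    (ha : IsTrilin n a) : IsTrilin n (c • a) := by
  obtain ⟨ha1, ha2, ha3, ha4, ha5, ha6⟩ := ha
  refine ⟨fun X X' Y Z => ?_, fun d X Y Z => ?_, fun X Y Y' Z => ?_,
    fun d X Y Z => ?_, fun X Y Z Z' => ?_, fun d X Y Z => ?_⟩ <;>
      simp only [Pi.smul_apply, smul_eq_mul]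
  · linear_combination c * ha1 X X' Y Z
  · linear_combination c * ha2 d X Y Z
  · linear_combination c * ha3 X Y Y' Z
  · linear_combination c * ha4 d X Y Z
  · linear_combination c * ha5 X Y Z Z'
  · linear_combination c * ha6 d X Y Z

theorem IsTrilin.zero (n : ℕ) : IsTrilin n (0 : V n → V n → V n → ℝ) := by
  refine ⟨fun X X' Y Z => by simp, fun c X Y Z => by simp, fun X Y Y' Z => by simp,
    fun c X Y Z => by simp, fun X Y Z Z' => by simp, fun c X Y Z => by simp⟩

/-- The kernel of `τ₂`: pairs `(B_Γ, B_C)` with `B_Γ` trilinear, antisymmetric and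
semibasic in its last two arguments, and `B_C` symmetric bilinear, satisfying the
three equations `τ¹_Γ = τ²_Γ = τ_{ΓC} = 0`. -/
def kerTau2 (n : ℕ) : Submodule ℝ ((V n → V n → V n → ℝ) × Bil n) where
  carrier := {B | IsTrilin n B.1 ∧
    (∀ X Y Z, B.1 X Y Z = - B.1 X Z Y) ∧
    (∀ X (y : Fin n → ℝ) Z, B.1 X (0, y) Z = 0) ∧
    (∀ X Y (z : Fin n → ℝ), B.1 X Y (0, z) = 0) ∧
    (∀ X Y, B.2 X Y = B.2 Y X) ∧
    (∀ X Y Z, B.1 (Ph n X) Y Z + B.1 (Ph n Y) Z X + B.1 (Ph n Z) X Y = 0) ∧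
    (∀ X Y Z, B.1 (Jmap n X) Y Z + B.1 (Jmap n Y) Z X + B.1 (Jmap n Z) X Y = 0) ∧
    (∀ X Y, (1 / 2 : ℝ) * B.1 (Cvec n) X Y
      - B.2 (Ph n X) (Jmap n Y) + B.2 (Ph n Y) (Jmap n X) = 0)}
  add_mem' := by
    rintro a b ⟨haT, ha1, ha2, ha3, ha4, ha5, ha6, ha7⟩
      ⟨hbT, hb1, hb2, hb3, hb4, hb5, hb6, hb7⟩
    refine ⟨haT.add hbT, fun X Y Z => ?_, fun X y Z => ?_, fun X Y z => ?_,
      fun X Y => ?_, fun X Y Z => ?_, fun X Y Z => ?_, fun X Y => ?_⟩ <;>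
      simp only [Prod.fst_add, Prod.snd_add, Pi.add_apply, LinearMap.add_apply]
    · linear_combination ha1 X Y Z + hb1 X Y Z
    · linear_combination ha2 X y Z + hb2 X y Z
    · linear_combination ha3 X Y z + hb3 X Y z
    · linear_combination ha4 X Y + hb4 X Y
    · linear_combination ha5 X Y Z + hb5 X Y Z
    · linear_combination ha6 X Y Z + hb6 X Y Z
    · linear_combination ha7 X Y + hb7 X Y
  zero_mem' := ⟨IsTrilin.zero n, fun X Y Z => by simp, fun X y Z => by simp,
    fun X Y z => by simp, fun X Y => by simp, fun X Y Z => by simp,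
    fun X Y Z => by simp, fun X Y => by simp⟩
  smul_mem' := by
    rintro c a ⟨haT, ha1, ha2, ha3, ha4, ha5, ha6, ha7⟩
    refine ⟨haT.smul c, fun X Y Z => ?_, fun X y Z => ?_, fun X Y z => ?_,
      fun X Y => ?_, fun X Y Z => ?_, fun X Y Z => ?_, fun X Y => ?_⟩ <;>
      simp only [Prod.smul_fst, Prod.smul_snd, Pi.smul_apply, LinearMap.smul_apply,
        smul_eq_mul]
    · linear_combination c * ha1 X Y Z
    · linear_combination c * ha2 X y Z
    · linear_combination c * ha3 X Y z
    · linear_combination c * ha4 X Y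
    · linear_combination c * ha5 X Y Z
    · linear_combination c * ha6 X Y Z
    · linear_combination c * ha7 X Y



open Module Finset

abbrev ι2 (n : ℕ) := {p : Fin n × Fin n // p.1 ≤ p.2}
abbrev ι3 (n : ℕ) := {t : Fin n × Fin n × Fin n // t.1 ≤ t.2.1 ∧ t.2.1 ≤ t.2.2}

def gsum (N : ℕ) : ℕ := ∑ k ∈ Finset.range N, (k+1)

lemma gauss (N : ℕ) : 2 * gsum N = N^2 + N := by
  induction N with
  | zero => simp [gsum]
  | succ N ih => unfold gsum at *; rw [Finset.sum_range_succ, Nat.mul_add, ih]; ring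

lemma sum_ite_le (m N : ℕ) : ∑ i ∈ Finset.range N, (if i ≤ m then 1 else 0) = min (m+1) N := by
  induction N with
  | zero => simp
  | succ N ih =>
    rw [Finset.sum_range_succ, ih]
    rcases le_or_gt N m with h|h
    · rw [if_pos h]; omega
    · rw [if_neg (by omega)]; omega

lemma sum_ite_le' (m N : ℕ) :
    ∑ i ∈ Finset.range N, (if i ≤ m then i + 1 else 0) = gsum (min (m+1) N) := by
  induction N with
  | zero => simp [gsum]
  | succ N ih =>
    rw [Finset.sum_range_succ, ih]
    rcases le_or_gt N m with h|h
    · have h1 : min (m+1) N = N := by omega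
      have h2 : min (m+1) (N+1) = N+1 := by omega
      rw [h1, h2, if_pos h, show gsum (N+1) = gsum N + (N+1) from Finset.sum_range_succ _ _]
    · have h1 : min (m+1) N = m+1 := by omega
      have h2 : min (m+1) (N+1) = m+1 := by omega
      rw [h1, h2, if_neg (by omega), add_zero]

lemma cube (N : ℕ) : 6 * ∑ k ∈ Finset.range N, gsum (k+1) = N^3 + 3*N^2 + 2*N := by
  induction N with
  | zero => simp
  | succ N ih =>
    rw [Finset.sum_range_succ, Nat.mul_add, ih]
    have h := gauss (N+1)
    have h6 : 6 * gsum (N+1) = 3*((N+1)^2 + (N+1)) := by linarith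
    rw [h6]; ring

lemma card_ι2 (n : ℕ) : 2 * Fintype.card (ι2 n) = n^2 + n := by
  have h1 : Fintype.card (ι2 n) = gsum n := by
    rw [Fintype.card_subtype, Finset.card_filter]
    rw [Fintype.sum_prod_type]
    rw [Finset.sum_comm]
    have hin : ∀ j : Fin n, (∑ i : Fin n, if (i, j).1 ≤ (i, j).2 then 1 else 0) = (j : ℕ) + 1 := by
      intro j
      simp only [Fin.le_def]
      rw [Fin.sum_univ_eq_sum_range (fun iv => if iv ≤ (j:ℕ) then 1 else 0) n, sum_ite_le]
      omega
    rw [Finset.sum_congr rfl (fun j _ => hin j)]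
    rw [Fin.sum_univ_eq_sum_range (fun jv => jv + 1) n]
    rfl
  rw [h1]; exact gauss n

lemma card_ι3 (n : ℕ) : 6 * Fintype.card (ι3 n) = n^3 + 3*n^2 + 2*n := by
  have h1 : Fintype.card (ι3 n) = ∑ k ∈ Finset.range n, gsum (k+1) := by
    rw [Fintype.card_subtype, Finset.card_filter]
    rw [Fintype.sum_prod_type]
    rw [Finset.sum_comm]
    have hin : ∀ jk : Fin n × Fin n, (∑ i : Fin n,
        if (i, jk).1 ≤ (i, jk).2.1 ∧ (i, jk).2.1 ≤ (i, jk).2.2 then 1 else 0)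
        = if (jk.1 : ℕ) ≤ (jk.2 : ℕ) then (jk.1 : ℕ) + 1 else 0 := by
      intro jk
      simp only [Fin.le_def]
      rcases le_or_gt (jk.1 : ℕ) (jk.2 : ℕ) with h|h
      · rw [if_pos h]
        simp only [h, and_true]
        rw [Fin.sum_univ_eq_sum_range (fun iv => if iv ≤ (jk.1:ℕ) then 1 else 0) n, sum_ite_le]
        omega
      · rw [if_neg (by omega)]
        simp only [show ¬ ((jk.1:ℕ) ≤ (jk.2:ℕ)) from by omega, and_false]
        simp
    rw [Finset.sum_congr rfl (fun jk _ => hin jk)]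
    rw [Fintype.sum_prod_type]
    rw [Finset.sum_comm]
    have hin2 : ∀ k : Fin n, (∑ j : Fin n, if (j:ℕ) ≤ (k:ℕ) then (j:ℕ)+1 else 0) = gsum ((k:ℕ)+1) := by
      intro k
      rw [Fin.sum_univ_eq_sum_range (fun jv => if jv ≤ (k:ℕ) then jv+1 else 0) n, sum_ite_le']
      congr 1
      omega
    rw [Finset.sum_congr rfl (fun k _ => hin2 k)]
    rw [Fin.sum_univ_eq_sum_range (fun kv => gsum (kv+1)) n]
  rw [h1]; exact cube n
abbrev Mat (n : ℕ) := Fin n → Fin n → ℝ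
abbrev W3 (n : ℕ) := Fin n → Fin n → Fin n → ℝ

def Symmat (n : ℕ) : Submodule ℝ (Mat n) where
  carrier := {M | ∀ i j, M i j = M j i}
  add_mem' ha hb i j := by simp [ha i j, hb i j]
  zero_mem' i j := rfl
  smul_mem' c a ha i j := by simp [ha i j]

noncomputable def symmatEquiv (n : ℕ) : ↥(Symmat n) ≃ₗ[ℝ] (ι2 n → ℝ) where
  toFun M := fun p => M.1 p.1.1 p.1.2
  map_add' a b := rfl
  map_smul' c a := rfl
  invFun f := ⟨fun i j => f ⟨(min i j, max i j), min_le_max⟩, fun i j =>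
    congrArg f (Subtype.ext (Prod.ext (min_comm i j) (max_comm i j)))⟩
  left_inv M := by
    apply Subtype.ext
    funext i j
    have hM : ∀ i j, M.1 i j = M.1 j i := M.2
    rcases le_total i j with h|h
    · show M.1 (min i j) (max i j) = M.1 i j
      rw [min_eq_left h, max_eq_right h]
    · show M.1 (min i j) (max i j) = M.1 i j
      rw [min_eq_right h, max_eq_left h, hM]
  right_inv f := by
    funext p
    obtain ⟨⟨i, j⟩, h⟩ := p
    show f ⟨(min i j, max i j), _⟩ = f ⟨(i, j), h⟩
    exact congrArg f (Subtype.ext (Prod.ext (min_eq_left h) (max_eq_right h)))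

lemma finrank_Symmat (n : ℕ) :
    Module.finrank ℝ ↥(Symmat n) = Fintype.card (ι2 n) := by
  rw [(symmatEquiv n).finrank_eq, Module.finrank_pi]

def Sym2sub (n : ℕ) : Submodule ℝ (W3 n) where
  carrier := {U | ∀ i j k, U i j k = U j i k}
  add_mem' ha hb i j k := by simp [ha i j k, hb i j k]
  zero_mem' i j k := rfl
  smul_mem' c a ha i j k := by simp [ha i j k]

noncomputable def sym2Equiv (n : ℕ) : ↥(Sym2sub n) ≃ₗ[ℝ] (ι2 n × Fin n → ℝ) where
  toFun U := fun q => U.1 q.1.1.1 q.1.1.2 q.2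
  map_add' a b := rfl
  map_smul' c a := rfl
  invFun f := ⟨fun i j k => f (⟨(min i j, max i j), min_le_max⟩, k), fun i j k =>
    congrArg f (Prod.ext (Subtype.ext (Prod.ext (min_comm i j) (max_comm i j))) rfl)⟩
  left_inv U := by
    apply Subtype.ext
    funext i j k
    have hU : ∀ i j k, U.1 i j k = U.1 j i k := U.2
    rcases le_total i j with h|h
    · show U.1 (min i j) (max i j) k = U.1 i j k
      rw [min_eq_left h, max_eq_right h]
    · show U.1 (min i j) (max i j) k = U.1 i j k
      rw [min_eq_right h, max_eq_left h, hU]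
  right_inv f := by
    funext q
    obtain ⟨⟨⟨i, j⟩, h⟩, k⟩ := q
    show f (⟨(min i j, max i j), _⟩, k) = f (⟨(i, j), h⟩, k)
    exact congrArg f (Prod.ext (Subtype.ext (Prod.ext (min_eq_left h) (max_eq_right h))) rfl)

lemma finrank_Sym2sub (n : ℕ) :
    Module.finrank ℝ ↥(Sym2sub n) = Fintype.card (ι2 n) * n := by
  rw [(sym2Equiv n).finrank_eq, Module.finrank_pi, Fintype.card_prod, Fintype.card_fin]

def Sym3sub (n : ℕ) : Submodule ℝ (W3 n) where
  carrier := {U | (∀ i j k, U i j k = U j i k) ∧ (∀ i j k, U i j k = U i k j)}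
  add_mem' ha hb := ⟨fun i j k => by simp [ha.1 i j k, hb.1 i j k],
    fun i j k => by simp [ha.2 i j k, hb.2 i j k]⟩
  zero_mem' := ⟨fun i j k => rfl, fun i j k => rfl⟩
  smul_mem' c a ha := ⟨fun i j k => by simp [ha.1 i j k], fun i j k => by simp [ha.2 i j k]⟩

section sort3
variable {α : Type*} [LinearOrder α]

def lo3 (i j k : α) : α := min i (min j k)
def mi3 (i j k : α) : α := min (max i j) (min (max j k) (max i k))
def hi3 (i j k : α) : α := max i (max j k)

lemma lo3_swap12 (i j k : α) : lo3 i j k = lo3 j i k := min_left_comm i j k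
lemma lo3_swap23 (i j k : α) : lo3 i j k = lo3 i k j := by rw [lo3, lo3, min_comm j k]
lemma hi3_swap12 (i j k : α) : hi3 i j k = hi3 j i k := max_left_comm i j k
lemma hi3_swap23 (i j k : α) : hi3 i j k = hi3 i k j := by rw [hi3, hi3, max_comm j k]
lemma mi3_swap12 (i j k : α) : mi3 i j k = mi3 j i k := by
  rw [mi3, mi3, max_comm j i, min_comm (max j k) (max i k)]
lemma mi3_swap23 (i j k : α) : mi3 i j k = mi3 i k j := by
  rw [mi3, mi3, max_comm k j, min_comm (max j k) (max i k),
    min_left_comm (max i j) (max i k), min_comm (max i j) (max j k)]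
lemma lo3_le_mi3 (i j k : α) : lo3 i j k ≤ mi3 i j k := by
  apply le_min
  · exact le_trans (min_le_left _ _) (le_max_left i j)
  · apply le_min
    · exact le_trans (min_le_right _ _) (le_trans (min_le_left _ _) (le_max_left j k))
    · exact le_trans (min_le_left _ _) (le_max_left i k)
lemma mi3_le_hi3 (i j k : α) : mi3 i j k ≤ hi3 i j k :=
  le_trans (min_le_right _ _) (le_trans (min_le_left _ _) (le_max_right i (max j k)))
lemma lo3_sorted {i j k : α} (h1 : i ≤ j) (h2 : j ≤ k) : lo3 i j k = i := by
  rw [lo3, min_eq_left h2, min_eq_left h1]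
lemma mi3_sorted {i j k : α} (h1 : i ≤ j) (h2 : j ≤ k) : mi3 i j k = j := by
  rw [mi3, max_eq_right h1, max_eq_right h2, max_eq_right (h1.trans h2), min_self,
    min_eq_left h2]
lemma hi3_sorted {i j k : α} (h1 : i ≤ j) (h2 : j ≤ k) : hi3 i j k = k := by
  rw [hi3, max_eq_right h2, max_eq_right (h1.trans h2)]
end sort3

lemma sym3_ext {n : ℕ} {U W : W3 n}
    (hU1 : ∀ i j k, U i j k = U j i k) (hU2 : ∀ i j k, U i j k = U i k j)
    (hW1 : ∀ i j k, W i j k = W j i k) (hW2 : ∀ i j k, W i j k = W i k j)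
    (h : ∀ a b c, a ≤ b → b ≤ c → U a b c = W a b c) : U = W := by
  funext i j k
  rcases le_total i j with hij|hij <;> rcases le_total j k with hjk|hjk <;>
    rcases le_total i k with hik|hik
  · exact h i j k hij hjk
  · rw [hU2, hU1, hW2, hW1]; exact h k i j hik hij
  · rw [hU2, hW2]; exact h i k j hik hjk
  · rw [hU2, hU1, hW2, hW1]; exact h k i j hik hij
  · rw [hU1, hW1]; exact h j i k hij hik
  · rw [hU1 i j k, hU2 j i k, hW1 i j k, hW2 j i k]; exact h j k i hjk hik
  · rw [hU2 i j k, hU1 i k j, hU2 k i j, hW2 i j k, hW1 i k j, hW2 k i j]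
    exact h k j i hjk hij
  · rw [hU2 i j k, hU1 i k j, hU2 k i j, hW2 i j k, hW1 i k j, hW2 k i j]
    exact h k j i hjk hij

noncomputable def sym3Equiv (n : ℕ) : ↥(Sym3sub n) ≃ₗ[ℝ] (ι3 n → ℝ) where
  toFun U := fun t => U.1 t.1.1 t.1.2.1 t.1.2.2
  map_add' a b := rfl
  map_smul' c a := rfl
  invFun f := ⟨fun i j k => f ⟨(lo3 i j k, mi3 i j k, hi3 i j k),
      ⟨lo3_le_mi3 i j k, mi3_le_hi3 i j k⟩⟩,
    fun i j k => congrArg f (Subtype.ext (Prod.ext (lo3_swap12 i j k)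
      (Prod.ext (mi3_swap12 i j k) (hi3_swap12 i j k)))),
    fun i j k => congrArg f (Subtype.ext (Prod.ext (lo3_swap23 i j k)
      (Prod.ext (mi3_swap23 i j k) (hi3_swap23 i j k))))⟩
  left_inv U := by
    apply Subtype.ext
    have hU1 : ∀ i j k, U.1 i j k = U.1 j i k := U.2.1
    have hU2 : ∀ i j k, U.1 i j k = U.1 i k j := U.2.2
    apply sym3_ext ?_ ?_ hU1 hU2 ?_
    · intro i j k
      exact congrArg (fun t : ι3 n => U.1 t.1.1 t.1.2.1 t.1.2.2)
        (Subtype.ext (Prod.ext (lo3_swap12 i j k)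
          (Prod.ext (mi3_swap12 i j k) (hi3_swap12 i j k))))
    · intro i j k
      exact congrArg (fun t : ι3 n => U.1 t.1.1 t.1.2.1 t.1.2.2)
        (Subtype.ext (Prod.ext (lo3_swap23 i j k)
          (Prod.ext (mi3_swap23 i j k) (hi3_swap23 i j k))))
    · intro a b c h1 h2
      show U.1 (lo3 a b c) (mi3 a b c) (hi3 a b c) = U.1 a b c
      rw [lo3_sorted h1 h2, mi3_sorted h1 h2, hi3_sorted h1 h2]
  right_inv f := by
    funext t
    obtain ⟨⟨a, b, c⟩, h1, h2⟩ := t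
    show f ⟨(lo3 a b c, mi3 a b c, hi3 a b c), _⟩ = f ⟨(a, b, c), ⟨h1, h2⟩⟩
    exact congrArg f (Subtype.ext (Prod.ext (lo3_sorted h1 h2)
      (Prod.ext (mi3_sorted h1 h2) (hi3_sorted h1 h2))))
def Ksub (n : ℕ) : Submodule ℝ (W3 n) where
  carrier := {T | (∀ i j k, T i j k = - T i k j) ∧ (∀ i j k, T i j k + T j k i + T k i j = 0)}
  add_mem' := by
    rintro a b ⟨ha1, ha2⟩ ⟨hb1, hb2⟩
    refine ⟨fun i j k => ?_, fun i j k => ?_⟩ <;> simp only [Pi.add_apply]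
    · linear_combination ha1 i j k + hb1 i j k
    · linear_combination ha2 i j k + hb2 i j k
  zero_mem' := ⟨fun i j k => by simp, fun i j k => by simp⟩
  smul_mem' := by
    rintro c a ⟨ha1, ha2⟩
    refine ⟨fun i j k => ?_, fun i j k => ?_⟩ <;> simp only [Pi.smul_apply, smul_eq_mul]
    · linear_combination c * ha1 i j k
    · linear_combination c * ha2 i j k

noncomputable def phi (n : ℕ) : ↥(Sym2sub n) →ₗ[ℝ] W3 n where
  toFun U := fun i j k => U.1 i j k - U.1 i k j
  map_add' a b := by funext i j k; show (a.1 + b.1) i j k - _ = _; simp [Pi.add_apply]; ring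
  map_smul' c a := by funext i j k; show (c • a.1) i j k - _ = _; simp [Pi.smul_apply]; ring

lemma range_phi (n : ℕ) : LinearMap.range (phi n) = Ksub n := by
  apply le_antisymm
  · rintro T ⟨U, rfl⟩
    have hU : ∀ i j k, U.1 i j k = U.1 j i k := U.2
    refine ⟨fun i j k => ?_, fun i j k => ?_⟩
    · show U.1 i j k - U.1 i k j = -(U.1 i k j - U.1 i j k); ring
    · show U.1 i j k - U.1 i k j + (U.1 j k i - U.1 j i k) + (U.1 k i j - U.1 k j i) = 0
      linear_combination (-1 : ℝ) * (hU j i k) - hU k j i + hU k i j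
  · rintro T ⟨hT1, hT2⟩
    refine ⟨⟨fun i j k => (T i j k + T j i k) / 3, fun i j k => by ring⟩, ?_⟩
    funext i j k
    show (T i j k + T j i k) / 3 - (T i k j + T k i j) / 3 = T i j k
    linear_combination (-1/3 : ℝ) * hT1 i j k + (1/3 : ℝ) * hT1 j k i + (-1/3 : ℝ) * hT2 i j k

noncomputable def kerPhiEquiv (n : ℕ) : ↥(LinearMap.ker (phi n)) ≃ₗ[ℝ] ↥(Sym3sub n) where
  toFun u := ⟨u.1.1, u.1.2, fun i j k => by
    have h := congrFun (congrFun (congrFun (LinearMap.mem_ker.mp u.2) i) j) k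
    change u.1.1 i j k - u.1.1 i k j = 0 at h
    linarith⟩
  map_add' a b := rfl
  map_smul' c a := rfl
  invFun v := ⟨⟨v.1, v.2.1⟩, by
    apply LinearMap.mem_ker.mpr
    funext i j k
    show v.1 i j k - v.1 i k j = 0
    have := v.2.2 i j k
    linarith⟩
  left_inv u := rfl
  right_inv v := rfl

lemma finrank_Ksub (n : ℕ) :
    Module.finrank ℝ ↥(Ksub n) + Fintype.card (ι3 n) = Fintype.card (ι2 n) * n := by
  have h := LinearMap.finrank_range_add_finrank_ker (phi n)
  rw [range_phi, finrank_Sym2sub] at h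
  have h2 : Module.finrank ℝ ↥(LinearMap.ker (phi n)) = Fintype.card (ι3 n) := by
    rw [LinearEquiv.finrank_eq ((kerPhiEquiv n).trans (sym3Equiv n)), Module.finrank_pi]
  rw [← h2]; exact h

-- ### Part 4: bilinear side
variable {n : ℕ}

/-- standard basis vector -/
def bv {n : ℕ} (i : Fin n) : Fin n → ℝ := Pi.single i 1

lemma bv_apply (i a : Fin n) : bv i a = if a = i then 1 else 0 := Pi.single_apply i 1 a

def sumform (M : Mat n) (x y : Fin n → ℝ) : ℝ := ∑ i, ∑ j, M i j * x i * y j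

lemma sumform_addl (M : Mat n) (x x' y : Fin n → ℝ) :
    sumform M (x + x') y = sumform M x y + sumform M x' y := by
  unfold sumform
  rw [← Finset.sum_add_distrib]
  refine Finset.sum_congr rfl fun i _ => ?_
  rw [← Finset.sum_add_distrib]
  refine Finset.sum_congr rfl fun j _ => ?_
  simp only [Pi.add_apply]; ring

lemma sumform_addr (M : Mat n) (x y y' : Fin n → ℝ) :
    sumform M x (y + y') = sumform M x y + sumform M x y' := by
  unfold sumform
  rw [← Finset.sum_add_distrib]
  refine Finset.sum_congr rfl fun i _ => ?_
  rw [← Finset.sum_add_distrib]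
  refine Finset.sum_congr rfl fun j _ => ?_
  simp only [Pi.add_apply]; ring

lemma sumform_smull (M : Mat n) (c : ℝ) (x y : Fin n → ℝ) :
    sumform M (c • x) y = c * sumform M x y := by
  unfold sumform
  rw [Finset.mul_sum]
  refine Finset.sum_congr rfl fun i _ => ?_
  rw [Finset.mul_sum]
  refine Finset.sum_congr rfl fun j _ => ?_
  simp only [Pi.smul_apply, smul_eq_mul]; ring

lemma sumform_smulr (M : Mat n) (c : ℝ) (x y : Fin n → ℝ) :
    sumform M x (c • y) = c * sumform M x y := by
  unfold sumform
  rw [Finset.mul_sum]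
  refine Finset.sum_congr rfl fun i _ => ?_
  rw [Finset.mul_sum]
  refine Finset.sum_congr rfl fun j _ => ?_
  simp only [Pi.smul_apply, smul_eq_mul]; ring

lemma sumform_zerol (M : Mat n) (y : Fin n → ℝ) : sumform M 0 y = 0 := by
  simp [sumform]

lemma sumform_zeror (M : Mat n) (x : Fin n → ℝ) : sumform M x 0 = 0 := by
  simp [sumform]

lemma sumform_single (M : Mat n) (i j : Fin n) : sumform M (bv i) (bv j) = M i j := by
  unfold sumform
  simp [bv_apply, mul_ite, ite_mul, Finset.sum_ite_eq']

lemma sumform_swap {M : Mat n} (hM : ∀ i j, M i j = M j i) (x y : Fin n → ℝ) :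
    sumform M x y = sumform M y x := by
  unfold sumform
  rw [Finset.sum_comm]
  exact Finset.sum_congr rfl fun a _ => Finset.sum_congr rfl fun b _ => by rw [hM b a]; ring

lemma sumform_addM (M M' : Mat n) (x y : Fin n → ℝ) :
    sumform (M + M') x y = sumform M x y + sumform M' x y := by
  unfold sumform
  rw [← Finset.sum_add_distrib]
  refine Finset.sum_congr rfl fun i _ => ?_
  rw [← Finset.sum_add_distrib]
  refine Finset.sum_congr rfl fun j _ => ?_
  simp only [Pi.add_apply]; ring

lemma sumform_smulM (c : ℝ) (M : Mat n) (x y : Fin n → ℝ) :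
    sumform (c • M) x y = c * sumform M x y := by
  unfold sumform
  rw [Finset.mul_sum]
  refine Finset.sum_congr rfl fun i _ => ?_
  rw [Finset.mul_sum]
  refine Finset.sum_congr rfl fun j _ => ?_
  simp only [Pi.smul_apply, smul_eq_mul]; ring

/-- bilinear form from three matrices (blocks hh, hv=vh, vv) -/
noncomputable def bform (A C D : Mat n) : Bil n :=
  LinearMap.mk₂ ℝ
    (fun X Y => sumform A X.1 Y.1 + sumform C X.1 Y.2 + sumform C X.2 Y.1 + sumform D X.2 Y.2)
    (by intro X X' Y
        show sumform A (X.1 + X'.1) Y.1 + sumform C (X.1 + X'.1) Y.2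
          + sumform C (X.2 + X'.2) Y.1 + sumform D (X.2 + X'.2) Y.2 = _
        rw [sumform_addl, sumform_addl, sumform_addl, sumform_addl]; ring)
    (by intro c X Y
        show sumform A (c • X.1) Y.1 + sumform C (c • X.1) Y.2
          + sumform C (c • X.2) Y.1 + sumform D (c • X.2) Y.2 = _
        rw [sumform_smull, sumform_smull, sumform_smull, sumform_smull, smul_eq_mul]; ring)
    (by intro X Y Y'
        show sumform A X.1 (Y.1 + Y'.1) + sumform C X.1 (Y.2 + Y'.2)
          + sumform C X.2 (Y.1 + Y'.1) + sumform D X.2 (Y.2 + Y'.2) = _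
        rw [sumform_addr, sumform_addr, sumform_addr, sumform_addr]; ring)
    (by intro c X Y
        show sumform A X.1 (c • Y.1) + sumform C X.1 (c • Y.2)
          + sumform C X.2 (c • Y.1) + sumform D X.2 (c • Y.2) = _
        rw [sumform_smulr, sumform_smulr, sumform_smulr, sumform_smulr, smul_eq_mul]; ring)

lemma bform_apply (A C D : Mat n) (X Y : V n) :
    bform A C D X Y = sumform A X.1 Y.1 + sumform C X.1 Y.2
      + sumform C X.2 Y.1 + sumform D X.2 Y.2 := rfl

lemma vsplit (v : V n) : v = (v.1, 0) + (0, v.2) := by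
  apply Prod.ext <;> simp

lemma hsum (x : Fin n → ℝ) :
    ((x, (0 : Fin n → ℝ)) : V n) = ∑ i, x i • ((bv i, (0 : Fin n → ℝ)) : V n) := by
  apply Prod.ext
  · show x = (∑ i, x i • ((bv i, (0:Fin n → ℝ)) : V n)).1
    rw [Prod.fst_sum]
    funext a
    rw [Finset.sum_apply]
    simp [bv_apply, Finset.sum_ite_eq']
  · show (0 : Fin n → ℝ) = (∑ i, x i • ((bv i, (0:Fin n → ℝ)) : V n)).2
    rw [Prod.snd_sum]
    simp

lemma vsum (x : Fin n → ℝ) :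
    (((0 : Fin n → ℝ), x) : V n) = ∑ i, x i • (((0 : Fin n → ℝ), bv i) : V n) := by
  apply Prod.ext
  · rw [Prod.fst_sum]; simp
  · show x = (∑ i, x i • (((0:Fin n → ℝ), bv i) : V n)).2
    rw [Prod.snd_sum]
    funext a
    rw [Finset.sum_apply]
    simp [bv_apply, Finset.sum_ite_eq']

lemma bil_expand_h (Q : Bil n) (x : Fin n → ℝ) (Y : V n) :
    Q (x, 0) Y = ∑ i, x i * Q (bv i, 0) Y := by
  conv_lhs => rw [hsum x]
  simp only [map_sum, map_smul, LinearMap.sum_apply, LinearMap.smul_apply, smul_eq_mul]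

lemma bil_expand_v (Q : Bil n) (x : Fin n → ℝ) (Y : V n) :
    Q (0, x) Y = ∑ i, x i * Q (0, bv i) Y := by
  conv_lhs => rw [vsum x]
  simp only [map_sum, map_smul, LinearMap.sum_apply, LinearMap.smul_apply, smul_eq_mul]

lemma bil_expand_rh (Q : Bil n) (e : V n) (y : Fin n → ℝ) :
    Q e (y, 0) = ∑ j, y j * Q e (bv j, 0) := by
  conv_lhs => rw [hsum y]
  simp only [map_sum, map_smul, smul_eq_mul]

lemma bil_expand_rv (Q : Bil n) (e : V n) (y : Fin n → ℝ) :
    Q e (0, y) = ∑ j, y j * Q e (0, bv j) := by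
  conv_lhs => rw [vsum y]
  simp only [map_sum, map_smul, smul_eq_mul]

lemma bil_expand (Q : Bil n) (X Y : V n) :
    Q X Y = sumform (fun i j => Q (bv i, 0) (bv j, 0)) X.1 Y.1
      + sumform (fun i j => Q (bv i, 0) (0, bv j)) X.1 Y.2
      + sumform (fun i j => Q (0, bv i) (bv j, 0)) X.2 Y.1
      + sumform (fun i j => Q (0, bv i) (0, bv j)) X.2 Y.2 := by
  have key : ∀ e : V n, Q e Y = (∑ j, Y.1 j * Q e (bv j, 0)) + ∑ j, Y.2 j * Q e (0, bv j) := by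
    intro e
    conv_lhs => rw [vsplit Y]
    rw [map_add, bil_expand_rh, bil_expand_rv]
  calc Q X Y = Q (X.1, 0) Y + Q (0, X.2) Y := by
        conv_lhs => rw [vsplit X]
        rw [map_add, LinearMap.add_apply]
    _ = (∑ i, X.1 i * Q (bv i, 0) Y) + ∑ i, X.2 i * Q (0, bv i) Y := by
        rw [bil_expand_h, bil_expand_v]
    _ = (∑ i, X.1 i * ((∑ j, Y.1 j * Q (bv i, 0) (bv j, 0)) + ∑ j, Y.2 j * Q (bv i, 0) (0, bv j)))
        + ∑ i, X.2 i * ((∑ j, Y.1 j * Q (0, bv i) (bv j, 0)) + ∑ j, Y.2 j * Q (0, bv i) (0, bv j)) := by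
        congr 1
        · exact Finset.sum_congr rfl fun i _ => by rw [key (bv i, 0)]
        · exact Finset.sum_congr rfl fun i _ => by rw [key (0, bv i)]
    _ = _ := by
        simp only [mul_add, Finset.mul_sum, Finset.sum_add_distrib, sumform]
        have r : ∀ (f : Fin n → Fin n → ℝ) (u v : Fin n → ℝ),
            (∑ i, ∑ j, u i * (v j * f i j)) = ∑ i, ∑ j, f i j * u i * v j :=
          fun f u v => Finset.sum_congr rfl fun i _ => Finset.sum_congr rfl fun j _ => by ring
        rw [r _ X.1 Y.1, r _ X.1 Y.2, r _ X.2 Y.1, r _ X.2 Y.2]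
        ring

/-- symmetric bilinear forms with symmetric mixed block -/
def Spr (n : ℕ) : Submodule ℝ (Bil n) where
  carrier := {Q | (∀ X Y, Q X Y = Q Y X) ∧
    (∀ x y : Fin n → ℝ, Q (x, 0) (0, y) = Q (y, 0) (0, x))}
  add_mem' := by
    rintro a b ⟨ha1, ha2⟩ ⟨hb1, hb2⟩
    refine ⟨fun X Y => ?_, fun x y => ?_⟩ <;> simp only [LinearMap.add_apply]
    · rw [ha1 X Y, hb1 X Y]
    · rw [ha2 x y, hb2 x y]
  zero_mem' := ⟨fun X Y => rfl, fun x y => rfl⟩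
  smul_mem' := by
    rintro c a ⟨ha1, ha2⟩
    refine ⟨fun X Y => ?_, fun x y => ?_⟩ <;>
      simp only [LinearMap.smul_apply, smul_eq_mul]
    · rw [ha1 X Y]
    · rw [ha2 x y]

noncomputable def sprEquiv (n : ℕ) :
    ↥(Spr n) ≃ₗ[ℝ] (↥(Symmat n) × ↥(Symmat n) × ↥(Symmat n)) where
  toFun Q :=
    (⟨fun i j => Q.1 (bv i, 0) (bv j, 0), fun i j => Q.2.1 (bv i, 0) (bv j, 0)⟩,
     ⟨fun i j => Q.1 (bv i, 0) (0, bv j), fun i j => Q.2.2 (bv i) (bv j)⟩,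
     ⟨fun i j => Q.1 (0, bv i) (0, bv j), fun i j => Q.2.1 (0, bv i) (0, bv j)⟩)
  map_add' a b := rfl
  map_smul' c a := rfl
  invFun ACD := ⟨bform ACD.1.1 ACD.2.1.1 ACD.2.2.1, by
    have hA : ∀ i j, ACD.1.1 i j = ACD.1.1 j i := ACD.1.2
    have hC : ∀ i j, ACD.2.1.1 i j = ACD.2.1.1 j i := ACD.2.1.2
    have hD : ∀ i j, ACD.2.2.1 i j = ACD.2.2.1 j i := ACD.2.2.2
    constructor
    · intro X Y
      rw [bform_apply, bform_apply, sumform_swap hA X.1 Y.1, sumform_swap hD X.2 Y.2,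
        sumform_swap hC X.1 Y.2, sumform_swap hC X.2 Y.1]
      ring
    · intro x y
      rw [bform_apply, bform_apply]
      simp only [sumform_zerol, sumform_zeror, add_zero, zero_add]
      exact sumform_swap hC x y⟩
  left_inv Q := by
    apply Subtype.ext
    apply LinearMap.ext; intro X
    apply LinearMap.ext; intro Y
    rw [bform_apply, bil_expand Q.1 X Y]
    have hsym : ∀ X Y, Q.1 X Y = Q.1 Y X := Q.2.1
    have hmix : ∀ x y : Fin n → ℝ, Q.1 (x, 0) (0, y) = Q.1 (y, 0) (0, x) := Q.2.2
    have h3 : (fun i j => Q.1 (0, bv i) (bv j, 0)) = fun i j => Q.1 (bv i, 0) (0, bv j) := by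
      funext i j
      rw [hsym (0, bv i) (bv j, 0), hmix (bv j) (bv i)]
    rw [h3]
  right_inv ACD := by
    obtain ⟨A, C, D⟩ := ACD
    refine Prod.ext (Subtype.ext ?_) (Prod.ext (Subtype.ext ?_) (Subtype.ext ?_))
    · funext i j
      show bform A.1 C.1 D.1 (bv i, 0) (bv j, 0) = A.1 i j
      rw [bform_apply]
      simp only [sumform_zerol, sumform_zeror, sumform_single, add_zero, zero_add]
    · funext i j
      show bform A.1 C.1 D.1 (bv i, 0) (0, bv j) = C.1 i j
      rw [bform_apply]
      simp only [sumform_zerol, sumform_zeror, sumform_single, add_zero, zero_add]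
    · funext i j
      show bform A.1 C.1 D.1 (0, bv i) (0, bv j) = D.1 i j
      rw [bform_apply]
      simp only [sumform_zerol, sumform_zeror, sumform_single, add_zero, zero_add]

lemma finrank_Spr (n : ℕ) :
    Module.finrank ℝ ↥(Spr n) = 3 * Fintype.card (ι2 n) := by
  rw [LinearEquiv.finrank_eq (sprEquiv n), Module.finrank_prod, Module.finrank_prod,
    finrank_Symmat]
  ring

-- ### Part 5: trilinear machinery

lemma sum3_rot (F : Fin n → Fin n → Fin n → ℝ) :
    (∑ a, ∑ b, ∑ c, F a b c) = ∑ c, ∑ a, ∑ b, F a b c := by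
  calc (∑ a, ∑ b, ∑ c, F a b c) = ∑ a, ∑ c, ∑ b, F a b c :=
        Finset.sum_congr rfl fun a _ => Finset.sum_comm
    _ = ∑ c, ∑ a, ∑ b, F a b c := Finset.sum_comm

def triform (T : W3 n) (x y z : Fin n → ℝ) : ℝ := ∑ i, ∑ j, ∑ k, T i j k * x i * y j * z k

lemma triform_addl (T : W3 n) (x x' y z : Fin n → ℝ) :
    triform T (x + x') y z = triform T x y z + triform T x' y z := by
  unfold triform
  simp only [← Finset.sum_add_distrib]
  exact Finset.sum_congr rfl fun i _ => Finset.sum_congr rfl fun j _ =>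
    Finset.sum_congr rfl fun k _ => by simp only [Pi.add_apply]; ring

lemma triform_addm (T : W3 n) (x y y' z : Fin n → ℝ) :
    triform T x (y + y') z = triform T x y z + triform T x y' z := by
  unfold triform
  simp only [← Finset.sum_add_distrib]
  exact Finset.sum_congr rfl fun i _ => Finset.sum_congr rfl fun j _ =>
    Finset.sum_congr rfl fun k _ => by simp only [Pi.add_apply]; ring

lemma triform_addr (T : W3 n) (x y z z' : Fin n → ℝ) :
    triform T x y (z + z') = triform T x y z + triform T x y z' := by
  unfold triform
  simp only [← Finset.sum_add_distrib]
  exact Finset.sum_congr rfl fun i _ => Finset.sum_congr rfl fun j _ =>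
    Finset.sum_congr rfl fun k _ => by simp only [Pi.add_apply]; ring

lemma triform_smull (T : W3 n) (c : ℝ) (x y z : Fin n → ℝ) :
    triform T (c • x) y z = c * triform T x y z := by
  unfold triform
  simp only [Finset.mul_sum]
  exact Finset.sum_congr rfl fun i _ => Finset.sum_congr rfl fun j _ =>
    Finset.sum_congr rfl fun k _ => by simp only [Pi.smul_apply, smul_eq_mul]; ring

lemma triform_smulm (T : W3 n) (c : ℝ) (x y z : Fin n → ℝ) :
    triform T x (c • y) z = c * triform T x y z := by
  unfold triform
  simp only [Finset.mul_sum]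
  exact Finset.sum_congr rfl fun i _ => Finset.sum_congr rfl fun j _ =>
    Finset.sum_congr rfl fun k _ => by simp only [Pi.smul_apply, smul_eq_mul]; ring

lemma triform_smulr (T : W3 n) (c : ℝ) (x y z : Fin n → ℝ) :
    triform T x y (c • z) = c * triform T x y z := by
  unfold triform
  simp only [Finset.mul_sum]
  exact Finset.sum_congr rfl fun i _ => Finset.sum_congr rfl fun j _ =>
    Finset.sum_congr rfl fun k _ => by simp only [Pi.smul_apply, smul_eq_mul]; ring

lemma triform_zerol (T : W3 n) (y z : Fin n → ℝ) : triform T 0 y z = 0 := by simp [triform]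
lemma triform_zerom (T : W3 n) (x z : Fin n → ℝ) : triform T x 0 z = 0 := by simp [triform]
lemma triform_zeror (T : W3 n) (x y : Fin n → ℝ) : triform T x y 0 = 0 := by simp [triform]

lemma triform_addT (T T' : W3 n) (x y z : Fin n → ℝ) :
    triform (T + T') x y z = triform T x y z + triform T' x y z := by
  unfold triform
  simp only [← Finset.sum_add_distrib]
  exact Finset.sum_congr rfl fun i _ => Finset.sum_congr rfl fun j _ =>
    Finset.sum_congr rfl fun k _ => by simp only [Pi.add_apply]; ring

lemma triform_smulT (c : ℝ) (T : W3 n) (x y z : Fin n → ℝ) :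
    triform (c • T) x y z = c * triform T x y z := by
  unfold triform
  simp only [Finset.mul_sum]
  exact Finset.sum_congr rfl fun i _ => Finset.sum_congr rfl fun j _ =>
    Finset.sum_congr rfl fun k _ => by simp only [Pi.smul_apply, smul_eq_mul]; ring

lemma triform_single (T : W3 n) (a b c : Fin n) :
    triform T (bv a) (bv b) (bv c) = T a b c := by
  unfold triform
  simp [bv_apply, mul_ite, ite_mul, mul_one, mul_zero, zero_mul, Finset.sum_ite_eq']

lemma triform_antisym23 {T : W3 n} (hT : ∀ i j k, T i j k = -T i k j) (x y z : Fin n → ℝ) :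
    triform T x y z = - triform T x z y := by
  unfold triform
  calc (∑ i, ∑ j, ∑ k, T i j k * x i * y j * z k)
      = ∑ i, ∑ j, ∑ k, -T i k j * x i * y j * z k :=
        Finset.sum_congr rfl fun i _ => Finset.sum_congr rfl fun j _ =>
          Finset.sum_congr rfl fun k _ => by rw [hT i j k]
    _ = ∑ i, ∑ k, ∑ j, -T i k j * x i * y j * z k :=
        Finset.sum_congr rfl fun i _ => Finset.sum_comm
    _ = -∑ i, ∑ j, ∑ k, T i j k * x i * z j * y k := by
        rw [← Finset.sum_neg_distrib]
        refine Finset.sum_congr rfl fun i _ => ?_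
        rw [← Finset.sum_neg_distrib]
        refine Finset.sum_congr rfl fun a _ => ?_
        rw [← Finset.sum_neg_distrib]
        exact Finset.sum_congr rfl fun b _ => by ring

lemma triform_cyc {T : W3 n} (hT : ∀ i j k, T i j k + T j k i + T k i j = 0)
    (x y z : Fin n → ℝ) :
    triform T x y z + triform T y z x + triform T z x y = 0 := by
  have h2 : triform T y z x = ∑ i, ∑ j, ∑ k, T j k i * x i * y j * z k := by
    unfold triform
    rw [sum3_rot]
    exact Finset.sum_congr rfl fun i _ => Finset.sum_congr rfl fun j _ =>
      Finset.sum_congr rfl fun k _ => by ring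
  have h3 : triform T z x y = ∑ i, ∑ j, ∑ k, T k i j * x i * y j * z k := by
    unfold triform
    rw [sum3_rot, sum3_rot]
    exact Finset.sum_congr rfl fun i _ => Finset.sum_congr rfl fun j _ =>
      Finset.sum_congr rfl fun k _ => by ring
  rw [h2, h3]
  unfold triform
  simp only [← Finset.sum_add_distrib]
  apply Finset.sum_eq_zero; intro i _
  apply Finset.sum_eq_zero; intro j _
  apply Finset.sum_eq_zero; intro k _
  linear_combination (x i * y j * z k) * hT i j k

/-- the reconstruction of a semibasic trilinear map from coordinate tensors -/
def recon (Th Tv : W3 n) : V n → V n → V n → ℝ :=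
  fun X Y Z => triform Th X.1 Y.1 Z.1 + triform Tv X.2 Y.1 Z.1

def thOf (B1 : V n → V n → V n → ℝ) : W3 n := fun i j k => B1 (bv i, 0) (bv j, 0) (bv k, 0)
def tvOf (B1 : V n → V n → V n → ℝ) : W3 n := fun i j k => B1 (0, bv i) (bv j, 0) (bv k, 0)

def tC (T : W3 n) : Mat n := fun j k => ∑ a, dlt n n a * T a j k

lemma tC_antisym {T : W3 n} (hT : ∀ i j k, T i j k = -T i k j) (j k : Fin n) :
    tC T j k = - tC T k j := by
  unfold tC
  rw [← Finset.sum_neg_distrib]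
  exact Finset.sum_congr rfl fun a _ => by rw [hT a j k]; ring

lemma tC_add (T T' : W3 n) : tC (T + T') = tC T + tC T' := by
  funext j k
  show (∑ a, dlt n n a * (T + T') a j k) = _
  simp only [Pi.add_apply, mul_add, Finset.sum_add_distrib]
  rfl

lemma tC_smul (c : ℝ) (T : W3 n) : tC (c • T) = c • tC T := by
  funext j k
  show (∑ a, dlt n n a * (c • T) a j k) = c * ∑ a, dlt n n a * T a j k
  rw [Finset.mul_sum]
  exact Finset.sum_congr rfl fun a _ => by simp only [Pi.smul_apply, smul_eq_mul]; ring

lemma triform_dlt (T : W3 n) (x y : Fin n → ℝ) :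
    triform T (dlt n n) x y = sumform (tC T) x y := by
  unfold triform sumform
  rw [sum3_rot, sum3_rot]
  refine Finset.sum_congr rfl fun j _ => Finset.sum_congr rfl fun k _ => ?_
  show (∑ a, T a j k * dlt n n a * x j * y k) = tC T j k * x j * y k
  unfold tC
  rw [Finset.sum_mul, Finset.sum_mul]
  exact Finset.sum_congr rfl fun a _ => by ring

def transp (M : Mat n) : Mat n := fun i j => M j i

lemma sumform_transp (M : Mat n) (x y : Fin n → ℝ) :
    sumform (transp M) x y = sumform M y x := by
  unfold sumform transp
  rw [Finset.sum_comm]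
  exact Finset.sum_congr rfl fun a _ => Finset.sum_congr rfl fun b _ => by ring

/-- bilinear form with only mixed blocks -/
noncomputable def bform2 (C1 C2 : Mat n) : Bil n :=
  LinearMap.mk₂ ℝ
    (fun X Y => sumform C1 X.1 Y.2 + sumform C2 X.2 Y.1)
    (by intro X X' Y
        show sumform C1 (X.1 + X'.1) Y.2 + sumform C2 (X.2 + X'.2) Y.1 = _
        rw [sumform_addl, sumform_addl]; ring)
    (by intro c X Y
        show sumform C1 (c • X.1) Y.2 + sumform C2 (c • X.2) Y.1 = _
        rw [sumform_smull, sumform_smull, smul_eq_mul]; ring)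
    (by intro X Y Y'
        show sumform C1 X.1 (Y.2 + Y'.2) + sumform C2 X.2 (Y.1 + Y'.1) = _
        rw [sumform_addr, sumform_addr]; ring)
    (by intro c X Y
        show sumform C1 X.1 (c • Y.2) + sumform C2 X.2 (c • Y.1) = _
        rw [sumform_smulr, sumform_smulr, smul_eq_mul]; ring)

lemma bform2_apply (C1 C2 : Mat n) (X Y : V n) :
    bform2 C1 C2 X Y = sumform C1 X.1 Y.2 + sumform C2 X.2 Y.1 := rfl

/-- the correction bilinear form `L T` -/
noncomputable def Lb (T : W3 n) : Bil n :=
  bform2 ((1/4 : ℝ) • tC T) ((1/4 : ℝ) • transp (tC T))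

lemma Lb_symm (T : W3 n) (X Y : V n) : Lb T X Y = Lb T Y X := by
  rw [Lb, bform2_apply, bform2_apply, sumform_smulM, sumform_smulM, sumform_smulM,
    sumform_smulM, sumform_transp, sumform_transp]
  ring

lemma Lb_mixed {T : W3 n} (hT : ∀ i j k, T i j k = -T i k j) (x y : Fin n → ℝ) :
    Lb T (x, 0) (0, y) - Lb T (y, 0) (0, x) = (1/2 : ℝ) * sumform (tC T) x y := by
  rw [Lb, bform2_apply, bform2_apply]
  simp only [sumform_zerol, sumform_zeror, add_zero, zero_add]
  rw [sumform_smulM, sumform_smulM]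
  have h : sumform (tC T) y x = - sumform (tC T) x y := by
    unfold sumform
    rw [Finset.sum_comm, ← Finset.sum_neg_distrib]
    refine Finset.sum_congr rfl fun a _ => ?_
    rw [← Finset.sum_neg_distrib]
    exact Finset.sum_congr rfl fun b _ => by rw [tC_antisym hT b a]; ring
  rw [h]
  ring

lemma Lb_add (T T' : W3 n) : Lb (T + T') = Lb T + Lb T' := by
  apply LinearMap.ext; intro X
  apply LinearMap.ext; intro Y
  show Lb (T + T') X Y = Lb T X Y + Lb T' X Y
  rw [Lb, Lb, Lb, bform2_apply, bform2_apply, bform2_apply, tC_add]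
  have ht : transp (tC T + tC T') = transp (tC T) + transp (tC T') := rfl
  rw [ht, smul_add, smul_add, sumform_addM, sumform_addM]
  ring

lemma Lb_smul (c : ℝ) (T : W3 n) : Lb (c • T) = c • Lb T := by
  apply LinearMap.ext; intro X
  apply LinearMap.ext; intro Y
  show Lb (c • T) X Y = c * Lb T X Y
  rw [Lb, Lb, bform2_apply, bform2_apply, tC_smul]
  have ht : transp (c • tC T) = c • transp (tC T) := rfl
  rw [ht, smul_comm (1/4 : ℝ) c, smul_comm (1/4 : ℝ) c]
  simp only [sumform_smulM]
  ring

lemma ahom_sum_h {g : V n → ℝ} (hadd : ∀ a b, g (a + b) = g a + g b)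
    (hsmul : ∀ (c : ℝ) a, g (c • a) = c * g a) (x : Fin n → ℝ) :
    g (x, 0) = ∑ i, x i * g (bv i, 0) := by
  have h0 : g 0 = 0 := by
    have h := hadd 0 0; simp only [add_zero] at h; linarith
  have hs : ∀ (s : Finset (Fin n)) (f : Fin n → V n),
      g (∑ i ∈ s, f i) = ∑ i ∈ s, g (f i) := by
    intro s
    induction s using Finset.induction_on with
    | empty => intro f; simpa using h0
    | insert _ _ hni ih => intro f; rw [Finset.sum_insert hni, Finset.sum_insert hni, hadd, ih]
  conv_lhs => rw [hsum x]
  rw [hs]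
  exact Finset.sum_congr rfl fun i _ => hsmul (x i) _

lemma ahom_sum_v {g : V n → ℝ} (hadd : ∀ a b, g (a + b) = g a + g b)
    (hsmul : ∀ (c : ℝ) a, g (c • a) = c * g a) (x : Fin n → ℝ) :
    g (0, x) = ∑ i, x i * g (0, bv i) := by
  have h0 : g 0 = 0 := by
    have h := hadd 0 0; simp only [add_zero] at h; linarith
  have hs : ∀ (s : Finset (Fin n)) (f : Fin n → V n),
      g (∑ i ∈ s, f i) = ∑ i ∈ s, g (f i) := by
    intro s
    induction s using Finset.induction_on with
    | empty => intro f; simpa using h0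
    | insert _ _ hni ih => intro f; rw [Finset.sum_insert hni, Finset.sum_insert hni, hadd, ih]
  conv_lhs => rw [vsum x]
  rw [hs]
  exact Finset.sum_congr rfl fun i _ => hsmul (x i) _

lemma tri_expand {B1 : V n → V n → V n → ℝ} (hT : IsTrilin n B1)
    (hsb2 : ∀ X (y : Fin n → ℝ) Z, B1 X (0, y) Z = 0)
    (hsb3 : ∀ X Y (z : Fin n → ℝ), B1 X Y (0, z) = 0)
    (X Y Z : V n) : B1 X Y Z = recon (thOf B1) (tvOf B1) X Y Z := by
  obtain ⟨a1, s1, a2, s2, a3, s3⟩ := hT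
  have e3 : ∀ e f : V n, B1 e f Z = ∑ k, Z.1 k * B1 e f (bv k, 0) := by
    intro e f
    conv_lhs => rw [vsplit Z]
    rw [a3, hsb3, add_zero]
    exact ahom_sum_h (g := fun W => B1 e f W) (fun a b => a3 e f a b) (fun c a => s3 c e f a) Z.1
  have e2 : ∀ e : V n, B1 e Y Z = ∑ j, Y.1 j * B1 e (bv j, 0) Z := by
    intro e
    conv_lhs => rw [vsplit Y]
    rw [a2, hsb2, add_zero]
    exact ahom_sum_h (g := fun W => B1 e W Z) (fun a b => a2 e a b Z) (fun c a => s2 c e a Z) Y.1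
  calc B1 X Y Z = B1 (X.1, 0) Y Z + B1 (0, X.2) Y Z := by
        conv_lhs => rw [vsplit X]
        rw [a1]
    _ = (∑ i, X.1 i * B1 (bv i, 0) Y Z) + ∑ i, X.2 i * B1 (0, bv i) Y Z := by
        rw [ahom_sum_h (g := fun W => B1 W Y Z) (fun a b => a1 a b Y Z) (fun c a => s1 c a Y Z) X.1,
          ahom_sum_v (g := fun W => B1 W Y Z) (fun a b => a1 a b Y Z) (fun c a => s1 c a Y Z) X.2]
    _ = (∑ i, X.1 i * (∑ j, Y.1 j * B1 (bv i, 0) (bv j, 0) Z))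
        + ∑ i, X.2 i * (∑ j, Y.1 j * B1 (0, bv i) (bv j, 0) Z) := by
        congr 1 <;> exact Finset.sum_congr rfl fun i _ => by rw [e2]
    _ = (∑ i, X.1 i * (∑ j, Y.1 j * (∑ k, Z.1 k * B1 (bv i, 0) (bv j, 0) (bv k, 0))))
        + ∑ i, X.2 i * (∑ j, Y.1 j * (∑ k, Z.1 k * B1 (0, bv i) (bv j, 0) (bv k, 0))) := by
        congr 1 <;> exact Finset.sum_congr rfl fun i _ => by
          congr 1
          exact Finset.sum_congr rfl fun j _ => by rw [e3]
    _ = recon (thOf B1) (tvOf B1) X Y Z := by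
        unfold recon triform thOf tvOf
        simp only [Finset.mul_sum]
        congr 1 <;>
          exact Finset.sum_congr rfl fun i _ => Finset.sum_congr rfl fun j _ =>
            Finset.sum_congr rfl fun k _ => by ring

lemma ph_eval (X : V n) : Ph n X = ((X.1, 0) : V n) := rfl
lemma j_eval (X : V n) : Jmap n X = ((0, X.1) : V n) := rfl
lemma cvec_eval : Cvec n = (((0 : Fin n → ℝ), dlt n n) : V n) := rfl

lemma recon_trilin (Th Tv : W3 n) : IsTrilin n (recon Th Tv) := by
  refine ⟨fun X X' Y Z => ?_, fun c X Y Z => ?_, fun X Y Y' Z => ?_,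
    fun c X Y Z => ?_, fun X Y Z Z' => ?_, fun c X Y Z => ?_⟩ <;> unfold recon
  · rw [Prod.fst_add, Prod.snd_add, triform_addl, triform_addl]; ring
  · rw [Prod.smul_fst, Prod.smul_snd, triform_smull, triform_smull]; ring
  · rw [Prod.fst_add, triform_addm, triform_addm]; ring
  · rw [Prod.smul_fst, triform_smulm, triform_smulm]; ring
  · rw [Prod.fst_add, triform_addr, triform_addr]; ring
  · rw [Prod.smul_fst, triform_smulr, triform_smulr]; ring

lemma recon_mem {Th Tv : W3 n} (hTh : Th ∈ Ksub n) (hTv : Tv ∈ Ksub n)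
    {Q : Bil n} (hQ : Q ∈ Spr n) :
    ((recon Th Tv, Q + Lb Tv) : (V n → V n → V n → ℝ) × Bil n) ∈ kerTau2 n := by
  obtain ⟨hTh1, hTh2⟩ := hTh
  obtain ⟨hTv1, hTv2⟩ := hTv
  obtain ⟨hQ1, hQ2⟩ := hQ
  refine ⟨recon_trilin Th Tv, fun X Y Z => ?_, fun X y Z => ?_, fun X Y z => ?_,
    fun X Y => ?_, fun X Y Z => ?_, fun X Y Z => ?_, fun X Y => ?_⟩
  · show recon Th Tv X Y Z = - recon Th Tv X Z Y
    unfold recon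
    rw [triform_antisym23 hTh1, triform_antisym23 hTv1]
    ring
  · show triform Th X.1 (0 : Fin n → ℝ) Z.1 + triform Tv X.2 (0 : Fin n → ℝ) Z.1 = 0
    rw [triform_zerom, triform_zerom, add_zero]
  · show triform Th X.1 Y.1 (0 : Fin n → ℝ) + triform Tv X.2 Y.1 (0 : Fin n → ℝ) = 0
    rw [triform_zeror, triform_zeror, add_zero]
  · show (Q + Lb Tv) X Y = (Q + Lb Tv) Y X
    simp only [LinearMap.add_apply]
    rw [hQ1 X Y, Lb_symm]
  · show recon Th Tv (Ph n X) Y Z + recon Th Tv (Ph n Y) Z X + recon Th Tv (Ph n Z) X Y = 0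
    have hr : ∀ P R S : V n, recon Th Tv (Ph n P) R S = triform Th P.1 R.1 S.1 := by
      intro P R S
      show triform Th P.1 R.1 S.1 + triform Tv (0 : Fin n → ℝ) R.1 S.1 = _
      rw [triform_zerol, add_zero]
    rw [hr, hr, hr]
    exact triform_cyc hTh2 X.1 Y.1 Z.1
  · show recon Th Tv (Jmap n X) Y Z + recon Th Tv (Jmap n Y) Z X
      + recon Th Tv (Jmap n Z) X Y = 0
    have hr : ∀ P R S : V n, recon Th Tv (Jmap n P) R S = triform Tv P.1 R.1 S.1 := by
      intro P R S
      show triform Th (0 : Fin n → ℝ) R.1 S.1 + triform Tv P.1 R.1 S.1 = _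
      rw [triform_zerol, zero_add]
    rw [hr, hr, hr]
    exact triform_cyc hTv2 X.1 Y.1 Z.1
  · show (1/2 : ℝ) * recon Th Tv (Cvec n) X Y
      - (Q + Lb Tv) (Ph n X) (Jmap n Y) + (Q + Lb Tv) (Ph n Y) (Jmap n X) = 0
    have h1 : recon Th Tv (Cvec n) X Y = sumform (tC Tv) X.1 Y.1 := by
      show triform Th (0 : Fin n → ℝ) X.1 Y.1 + triform Tv (dlt n n) X.1 Y.1 = _
      rw [triform_zerol, triform_dlt, zero_add]
    rw [ph_eval X, ph_eval Y, j_eval X, j_eval Y, h1]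
    simp only [LinearMap.add_apply]
    linear_combination (-1 : ℝ) * hQ2 X.1 Y.1 - Lb_mixed hTv1 X.1 Y.1

lemma extract_mem {B : (V n → V n → V n → ℝ) × Bil n} (hB : B ∈ kerTau2 n) :
    thOf B.1 ∈ Ksub n ∧ tvOf B.1 ∈ Ksub n ∧ (B.2 - Lb (tvOf B.1)) ∈ Spr n := by
  obtain ⟨hT, h1, h2, h3, h4, h5, h6, h7⟩ := hB
  have hth1 : ∀ i j k, thOf B.1 i j k = - thOf B.1 i k j := fun i j k => h1 _ _ _
  have htv1 : ∀ i j k, tvOf B.1 i j k = - tvOf B.1 i k j := fun i j k => h1 _ _ _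
  refine ⟨⟨hth1, fun i j k => ?_⟩, ⟨htv1, fun i j k => ?_⟩, fun X Y => ?_, fun x y => ?_⟩
  · have h := h5 (bv i, 0) (bv j, 0) (bv k, 0)
    simpa only [ph_eval, thOf] using h
  · have h := h6 (bv i, 0) (bv j, 0) (bv k, 0)
    simpa only [j_eval, tvOf] using h
  · show B.2 X Y - Lb (tvOf B.1) X Y = B.2 Y X - Lb (tvOf B.1) Y X
    rw [h4 X Y, Lb_symm]
  · show B.2 (x, 0) (0, y) - Lb (tvOf B.1) (x, 0) (0, y)
      = B.2 (y, 0) (0, x) - Lb (tvOf B.1) (y, 0) (0, x)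
    have hiii : (1/2 : ℝ) * B.1 (Cvec n) ((x, 0) : V n) ((y, 0) : V n)
        - B.2 ((x, 0) : V n) ((0, y) : V n) + B.2 ((y, 0) : V n) ((0, x) : V n) = 0 :=
      h7 ((x, 0) : V n) ((y, 0) : V n)
    have hexp : B.1 (Cvec n) ((x, 0) : V n) ((y, 0) : V n) = sumform (tC (tvOf B.1)) x y := by
      rw [tri_expand ⟨hT.1, hT.2.1, hT.2.2.1, hT.2.2.2.1, hT.2.2.2.2.1, hT.2.2.2.2.2⟩ h2 h3]
      show triform (thOf B.1) (0 : Fin n → ℝ) x y + triform (tvOf B.1) (dlt n n) x y = _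
      rw [triform_zerol, triform_dlt, zero_add]
    rw [hexp] at hiii
    linear_combination (-1 : ℝ) * hiii - Lb_mixed htv1 x y

noncomputable def mainEquiv (n : ℕ) :
    ↥(kerTau2 n) ≃ₗ[ℝ] (↥(Ksub n) × ↥(Ksub n) × ↥(Spr n)) where
  toFun B :=
    (⟨thOf B.1.1, (extract_mem B.2).1⟩, ⟨tvOf B.1.1, (extract_mem B.2).2.1⟩,
     ⟨B.1.2 - Lb (tvOf B.1.1), (extract_mem B.2).2.2⟩)
  map_add' B B' := by
    refine Prod.ext (Subtype.ext ?_) (Prod.ext (Subtype.ext ?_) (Subtype.ext ?_))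
    · funext i j k; rfl
    · funext i j k; rfl
    · show (B.1.2 + B'.1.2) - Lb (tvOf (B.1.1 + B'.1.1)) = _
      have htv : tvOf (B.1.1 + B'.1.1) = tvOf B.1.1 + tvOf B'.1.1 := rfl
      rw [htv, Lb_add]
      show _ = (B.1.2 - Lb (tvOf B.1.1)) + (B'.1.2 - Lb (tvOf B'.1.1))
      abel
  map_smul' c B := by
    refine Prod.ext (Subtype.ext ?_) (Prod.ext (Subtype.ext ?_) (Subtype.ext ?_))
    · funext i j k; rfl
    · funext i j k; rfl
    · show (c • B.1.2) - Lb (tvOf (c • B.1.1)) = _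
      have htv : tvOf (c • B.1.1) = c • tvOf B.1.1 := rfl
      rw [htv, Lb_smul]
      show _ = c • (B.1.2 - Lb (tvOf B.1.1))
      exact (smul_sub c B.1.2 (Lb (tvOf B.1.1))).symm
  invFun T := ⟨(recon T.1.1 T.2.1.1, T.2.2.1 + Lb T.2.1.1),
    recon_mem T.1.2 T.2.1.2 T.2.2.2⟩
  left_inv B := by
    obtain ⟨⟨B1, B2⟩, hB⟩ := B
    obtain ⟨hT, h1, h2, h3, _⟩ := hB
    apply Subtype.ext
    apply Prod.ext
    · show recon (thOf B1) (tvOf B1) = B1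
      funext X Y Z
      exact (tri_expand hT h2 h3 X Y Z).symm
    · show (B2 - Lb (tvOf B1)) + Lb (tvOf B1) = B2
      abel
  right_inv T := by
    obtain ⟨⟨Th, hTh⟩, ⟨Tv, hTv⟩, ⟨Q, hQ⟩⟩ := T
    have hth : thOf (recon Th Tv) = Th := by
      funext i j k
      show triform Th (bv i) (bv j) (bv k) + triform Tv (0 : Fin n → ℝ) (bv j) (bv k) = _
      rw [triform_single, triform_zerol, add_zero]
    have htv : tvOf (recon Th Tv) = Tv := by
      funext i j k
      show triform Th (0 : Fin n → ℝ) (bv j) (bv k) + triform Tv (bv i) (bv j) (bv k) = _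
      rw [triform_single, triform_zerol, zero_add]
    refine Prod.ext (Subtype.ext ?_) (Prod.ext (Subtype.ext ?_) (Subtype.ext ?_))
    · exact hth
    · exact htv
    · show (Q + Lb Tv) - Lb (tvOf (recon Th Tv)) = Q
      rw [htv]
      abel

lemma finrank_kerTau2_eq (n : ℕ) :
    Module.finrank ℝ ↥(kerTau2 n)
      = Module.finrank ℝ ↥(Ksub n) + (Module.finrank ℝ ↥(Ksub n)
        + (Module.finrank ℝ ↥(Symmat n) + (Module.finrank ℝ ↥(Symmat n)
          + Module.finrank ℝ ↥(Symmat n)))) := by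
  have h1 : Module.finrank ℝ ↥(kerTau2 n)
      = Module.finrank ℝ (↥(Ksub n) × ↥(Ksub n) × ↥(Symmat n) × ↥(Symmat n) × ↥(Symmat n)) :=
    LinearEquiv.finrank_eq ((mainEquiv n).trans
      ((LinearEquiv.refl ℝ ↥(Ksub n)).prodCongr
        ((LinearEquiv.refl ℝ ↥(Ksub n)).prodCongr (sprEquiv n))))
  rw [h1, Module.finrank_prod, Module.finrank_prod, Module.finrank_prod, Module.finrank_prod]

theorem dim_kerTau2' (n : ℕ) (hn : 1 ≤ n) :
    Module.finrank ℝ (kerTau2 n) = (4 * n ^ 3 + 9 * n ^ 2 + 5 * n) / 6 := by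
  have hK := finrank_Ksub n
  have hS := finrank_Symmat n
  have h2 := card_ι2 n
  have h3 := card_ι3 n
  have hD := finrank_kerTau2_eq n
  set A := Module.finrank ℝ ↥(Ksub n) with hA
  set B2 := Fintype.card (ι2 n) with hB2
  set C3 := Fintype.card (ι3 n) with hC3
  have hz : (6 : ℤ) * (Module.finrank ℝ ↥(kerTau2 n) : ℤ)
      = 4 * (n : ℤ)^3 + 9 * (n : ℤ)^2 + 5 * (n : ℤ) := by
    have hK' : (A : ℤ) + (C3 : ℤ) = (B2 : ℤ) * (n : ℤ) := by exact_mod_cast hK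
    have h2' : 2 * (B2 : ℤ) = (n : ℤ)^2 + (n : ℤ) := by exact_mod_cast h2
    have h3' : 6 * (C3 : ℤ) = (n : ℤ)^3 + 3*(n : ℤ)^2 + 2*(n : ℤ) := by exact_mod_cast h3
    have hD' : (Module.finrank ℝ ↥(kerTau2 n) : ℤ) = (A : ℤ) + ((A : ℤ) + 3 * (B2 : ℤ)) := by
      rw [hD, hS]; push_cast; ring
    linear_combination 6 * hD' + 12 * hK' + (9 + 6 * (n : ℤ)) * h2' + (-2 : ℤ) * h3'
  have h6 : 4 * n ^ 3 + 9 * n ^ 2 + 5 * n = 6 * Module.finrank ℝ ↥(kerTau2 n) := by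
    exact_mod_cast hz.symm
  rw [h6, Nat.mul_div_cancel_left _ (by norm_num : 0 < 6)]

/-- the kernel of `τ₂` has dimension `(4n³ + 9n² + 5n)/6`. -/
theorem dim_kerTau2 (n : ℕ) (hn : 1 ≤ n) :
    Module.finrank ℝ (kerTau2 n) = (4 * n ^ 3 + 9 * n ^ 2 + 5 * n) / 6 := by
  exact dim_kerTau2' n hn
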